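/- Let τ > 0, θ ∈ ℝ, δ > 0, W̄ > 0, n ∈ ℕ, and let W : Fin n → ℝ and t : Fin n → ℝ satisfy ∑_j W_j · exp(t_j/τ) > 0, ∑_j W_j − θ ≥ δ, |W_j| ≤ W̄ for all j, and t_j ≤ T(t,W) for all j, where T(t,W) := τ · log((∑_j W_j · exp(t_j/τ)) / (∑_j W_j − θ)). Then for every index k, the partial derivative of T with respect to the input time t_k, which equals W_k · exp(t_k/τ) / (∑_j W_j · exp(t_j/τ)), has absolute value at most W̄/δ. -/

import Mathlib

open Real Finset

/-- Within a causal piece, the partial derivative of the nLIF output spike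
time `T(t,W) = τ * log ((∑ j, W j * exp (t j / τ)) / (∑ j, W j - θ))` with respect to the
input spike time `t k` equals `W k * exp (t k / τ) / (∑ j, W j * exp (t j / τ))`, and its
absolute value is bounded by `W̄ / δ`. -/
theorem nLIF_spike_time_deriv_input_bound
    (τ θ δ Wbar : ℝ) (hτ : 0 < τ) (hδ : 0 < δ) (hWbar : 0 < Wbar)
    (n : ℕ) (W t : Fin n → ℝ)
    (hA : 0 < ∑ j, W j * Real.exp (t j / τ))
    (hB : δ ≤ (∑ j, W j) - θ)
    (hWb : ∀ j, |W j| ≤ Wbar)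
    (hle : ∀ j, t j ≤ τ * Real.log ((∑ j, W j * Real.exp (t j / τ)) / ((∑ j, W j) - θ)))
    (k : Fin n) :
    HasDerivAt
      (fun s : ℝ => τ * Real.log
        ((∑ j, W j * Real.exp (Function.update t k s j / τ)) / ((∑ j, W j) - θ)))
      (W k * Real.exp (t k / τ) / (∑ j, W j * Real.exp (t j / τ))) (t k) ∧
    |W k * Real.exp (t k / τ) / (∑ j, W j * Real.exp (t j / τ))| ≤ Wbar / δ := by
  set A := ∑ j, W j * Real.exp (t j / τ) with hAdef
  set C := (∑ j, W j) - θ with hCdef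
  have hC : 0 < C := lt_of_lt_of_le hδ hB
  have hAne : A ≠ 0 := ne_of_gt hA
  have hCne : C ≠ 0 := ne_of_gt hC
  have hτne : τ ≠ 0 := ne_of_gt hτ
  -- derivative of the sum
  have hg : HasDerivAt (fun s : ℝ => ∑ j, W j * Real.exp (Function.update t k s j / τ))
      (W k * Real.exp (t k / τ) / τ) (t k) := by
    have hsum : HasDerivAt (fun s : ℝ => ∑ j, W j * Real.exp (Function.update t k s j / τ))
        (∑ j, if j = k then W k * Real.exp (t k / τ) / τ else 0) (t k) := by
      apply HasDerivAt.fun_sum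
      intro j _
      by_cases h : j = k  -- inner
      · subst h
        simp only [if_pos rfl]
        have h1 : HasDerivAt (fun s : ℝ => s / τ) (1 / τ) (t j) :=
          (hasDerivAt_id (t j)).div_const τ
        have h2 := (h1.exp).const_mul (W j)
        have heq : (fun s : ℝ => W j * Real.exp (Function.update t j s j / τ))
            = fun s : ℝ => W j * Real.exp (s / τ) := by
          funext s; rw [Function.update_self]
        rw [heq]
        refine h2.congr_deriv ?_
        rw [if_pos trivial]
        ring
      · simp only [if_neg h]
        have : (fun s : ℝ => W j * Real.exp (Function.update t k s j / τ))
            = fun _ : ℝ => W j * Real.exp (t j / τ) := by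
          funext s; rw [Function.update_of_ne h]
        rw [this]
        exact hasDerivAt_const _ _
    simpa using hsum
  have hgval : (∑ j, W j * Real.exp (Function.update t k (t k) j / τ)) = A := by
    simp [Function.update_eq_self]
    exact hAdef.symm
  have hdiv := hg.div_const C
  have hlog := HasDerivAt.log hdiv (by rw [hgval]; exact div_ne_zero hAne hCne)
  rw [hgval] at hlog
  have hmain := hlog.const_mul τ
  constructor
  · refine hmain.congr_deriv ?_
    field_simp
  · -- bound
    have hexp : Real.exp (t k / τ) ≤ A / C := by
      have h1 : t k / τ ≤ Real.log (A / C) := by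
        rw [div_le_iff₀' hτ]
        exact hle k
      calc Real.exp (t k / τ) ≤ Real.exp (Real.log (A / C)) := Real.exp_le_exp.mpr h1
        _ = A / C := Real.exp_log (div_pos hA hC)
    have hpos : 0 < Real.exp (t k / τ) := Real.exp_pos _
    rw [abs_div, abs_of_pos hA, abs_mul, abs_of_pos hpos]
    rw [div_le_div_iff₀ hA hδ]
    calc |W k| * Real.exp (t k / τ) * δ ≤ Wbar * (A / C) * C := by
          apply mul_le_mul
          · exact mul_le_mul (hWb k) hexp (le_of_lt hpos) (le_of_lt hWbar)
          · exact hB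
          · exact le_of_lt hδ
          · positivity
      _ = Wbar * A := by field_simp
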